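/- Let R be a 2-torsion free σ-prime ring and U a nonzero σ-Lie ideal of R. If d is a derivation of R anti-commuting with σ (d∘σ = −σ∘d) such that d(U) = 0, then d = 0 or U ⊆ Z(R). -/
import Mathlib


theorem stmt6 (R : Type*) [Ring R]
  (σ : R → R)
  (hσadd : ∀ x y : R, σ (x + y) = σ x + σ y)
  (hσmul : ∀ x y : R, σ (x * y) = σ y * σ x)
  (hσinv : ∀ x : R, σ (σ x) = x)
  (htor : ∀ x : R, x + x = 0 → x = 0)
  (hsp : ∀ a b : R, (∀ r : R, a * r * b = 0) → (∀ r : R, a * r * σ b = 0) → a = 0 ∨ b = 0)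
  (U : AddSubgroup R)
  (hLie : ∀ u ∈ U, ∀ r : R, u * r - r * u ∈ U)
  (hσU : ∀ u ∈ U, σ u ∈ U)
  (hUnz : ∃ u ∈ U, u ≠ (0 : R))
  (d : R → R)
  (hdadd : ∀ x y : R, d (x + y) = d x + d y)
  (hdmul : ∀ x y : R, d (x * y) = d x * y + x * d y)
  (hdσ : ∀ x : R, d (σ x) = - σ (d x))
  (hdU : ∀ u ∈ U, d u = 0) :
    (∀ x : R, d x = 0) ∨ (∀ u ∈ U, ∀ r : R, u * r = r * u) := by
  have hdsub : ∀ x y : R, d (x - y) = d x - d y := by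
    intro x y
    have h := hdadd (x - y) y
    rw [sub_add_cancel] at h
    exact eq_sub_of_add_eq h.symm
  have hσsub : ∀ x y : R, σ (x - y) = σ x - σ y := by
    intro x y
    have h := hσadd (x - y) y
    rw [sub_add_cancel] at h
    exact eq_sub_of_add_eq h.symm
  have hσd : ∀ t : R, σ (d t) = -(d (σ t)) := by
    intro t
    rw [hdσ t, neg_neg]
  -- (*) : u commutes with d(R)
  have h1 : ∀ u ∈ U, ∀ r : R, u * d r - d r * u = 0 := by
    intro u hu r
    have h := hdU _ (hLie u hu r)
    rw [hdsub, hdmul, hdmul, hdU u hu] at h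
    have key : u * d r - d r * u = (0 * r + u * d r) - (d r * u + r * 0) := by
      noncomm_ring
    rw [key, h]
  have h2 : ∀ u ∈ U, ∀ r s : R,
      d r * (u * s - s * u) + (u * r - r * u) * d s = 0 := by
    intro u hu r s
    have e := h1 u hu (r * s)
    rw [hdmul] at e
    have c1 := h1 u hu r
    have c2 := h1 u hu s
    have key : d r * (u * s - s * u) + (u * r - r * u) * d s
        = (u * (d r * s + r * d s) - (d r * s + r * d s) * u)
          - (u * d r - d r * u) * s - r * (u * d s - d s * u) := by
      noncomm_ring
    rw [key, e, c1, c2]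
    simp
  have h3 : ∀ u ∈ U, ∀ r s t : R,
      d r * s * (u * t - t * u) + (u * r - r * u) * s * d t = 0 := by
    intro u hu r s t
    have A := h2 u hu r (s * t)
    rw [hdmul] at A
    have B := h2 u hu r s
    have key : d r * s * (u * t - t * u) + (u * r - r * u) * s * d t
        = (d r * (u * (s * t) - (s * t) * u) + (u * r - r * u) * (d s * t + s * d t))
          - (d r * (u * s - s * u) + (u * r - r * u) * d s) * t := by
      noncomm_ring
    rw [key, A, B]
    simp
  have h4 : ∀ u ∈ U, ∀ v ∈ U, ∀ s t : R, (u * v - v * u) * s * d t = 0 := by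
    intro u hu v hv s t
    have h := h3 u hu v s t
    rw [hdU v hv] at h
    simpa using h
  by_cases hall : ∀ x : R, d x = 0
  · exact Or.inl hall
  · right
    push_neg at hall
    obtain ⟨t₀, ht₀⟩ := hall
    have hcomm0 : ∀ u ∈ U, ∀ v ∈ U, u * v - v * u = 0 := by
      intro u hu v hv
      rcases hsp (u * v - v * u) (d t₀) (fun s => h4 u hu v hv s t₀)
          (fun s => by rw [hσd t₀, mul_neg, h4 u hu v hv s (σ t₀), neg_zero]) with h | h
      · exact h
      · exact absurd h ht₀
    have p1 : ∀ u ∈ U, ∀ x y : R, (u * x - x * u) * (u * y - y * u) = 0 := by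
      intro u hu x y
      have ha := hcomm0 u hu _ (hLie u hu (x * y))
      have hb := hcomm0 u hu _ (hLie u hu x)
      have hc := hcomm0 u hu _ (hLie u hu y)
      have key : (u * x - x * u) * (u * y - y * u) + (u * x - x * u) * (u * y - y * u)
          = (u * (u * (x * y) - (x * y) * u) - (u * (x * y) - (x * y) * u) * u)
            - (u * (u * x - x * u) - (u * x - x * u) * u) * y
            - x * (u * (u * y - y * u) - (u * y - y * u) * u) := by
        noncomm_ring
      rw [ha, hb, hc] at key
      exact htor _ (by simpa using key)
    have p2 : ∀ u ∈ U, ∀ x s y : R, (u * x - x * u) * s * (u * y - y * u) = 0 := by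
      intro u hu x s y
      have e1 := p1 u hu (x * s) y
      have e2 := p1 u hu s y
      have key : (u * x - x * u) * s * (u * y - y * u)
          = (u * (x * s) - (x * s) * u) * (u * y - y * u)
            - x * ((u * s - s * u) * (u * y - y * u)) := by
        noncomm_ring
      rw [key, e1, e2]
      simp
    have p3 : ∀ w ∈ U, (σ w = w ∨ σ w = -w) → ∀ x : R, w * x - x * w = 0 := by
      intro w hw hsw x
      have main : ∀ s : R, (w * x - x * w) * s * σ (w * x - x * w) = 0 := by
        intro s
        have hb : σ (w * x - x * w) = σ x * σ w - σ w * σ x := by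
          rw [hσsub, hσmul, hσmul]
        rcases hsw with h | h
        · rw [hb, h]
          have key : (w * x - x * w) * s * (σ x * w - w * σ x)
              = -((w * x - x * w) * s * (w * σ x - σ x * w)) := by noncomm_ring
          rw [key, p2 w hw x s (σ x), neg_zero]
        · rw [hb, h]
          have key : (w * x - x * w) * s * (σ x * -w - -w * σ x)
              = (w * x - x * w) * s * (w * σ x - σ x * w) := by noncomm_ring
          rw [key]
          exact p2 w hw x s (σ x)
      rcases hsp (w * x - x * w) (w * x - x * w) (fun s => p2 w hw x s x) main with h | h
      · exact h
      · exact h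
    intro u hu r
    have hw1 : u + σ u ∈ U := U.add_mem hu (hσU u hu)
    have hw2 : u - σ u ∈ U := U.sub_mem hu (hσU u hu)
    have hs1 : σ (u + σ u) = u + σ u := by rw [hσadd, hσinv, add_comm]
    have hs2 : σ (u - σ u) = -(u - σ u) := by rw [hσsub, hσinv, neg_sub]
    have e1 := p3 _ hw1 (Or.inl hs1) r
    have e2 := p3 _ hw2 (Or.inr hs2) r
    have key : (u * r - r * u) + (u * r - r * u)
        = ((u + σ u) * r - r * (u + σ u)) + ((u - σ u) * r - r * (u - σ u)) := by
      noncomm_ring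
    rw [e1, e2] at key
    have h0 := htor _ (by simpa using key)
    exact sub_eq_zero.mp h0
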